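/- arXiv:2411.00384 — 2 statements merged into one kernel-verified Lean document; each statement's English description precedes it below -/
import Mathlib

section
/- Let M' be a perfect matching in a one-to-one bipartite instance H and suppose every alternating cycle C with respect to M' in H satisfies wt_{M'}(C) ≤ 0. Then for every perfect matching N' of H, Δ(M', N') ≥ 0, i.e., M' is a popular perfect matching in H. -/
/-- Vote comparing neighbors of ranks `x` and `y` (lower rank = preferred). -/
def vsgn (x y : ℕ) : ℤ := if x < y then 1 else if y < x then -1 else 0

/-- `wt_{M'}(a,b) = vote_a(b, M'(a)) + vote_b(a, M'(b))` in a one-to-one instance. -/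
def wt1 {A B : Type*} (rA : A → B → ℕ) (rB : B → A → ℕ) (M' : A ≃ B)
    (a : A) (b : B) : ℤ :=
  vsgn (rA a b) (rA a (M' a)) + vsgn (rB b a) (rB b (M'.symm b))

/-- An alternating cycle with respect to the perfect matching `M'` in the one-to-one
instance with edge relation `Edge`: it visits distinct vertices
`f 0, g 0, f 1, g 1, …` cyclically, the edges `(f t, g t)` belonging to `M'` and the
edges `(f (t+1), g t)` being non-matching edges of the instance. -/
structure AltCycle1 {A B : Type*} (M' : A ≃ B) (Edge : A → B → Prop) where
  m : ℕ
  f : Fin (m + 2) → A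
  g : Fin (m + 2) → B
  hf : Function.Injective f
  hg : Function.Injective g
  hmatch : ∀ t, M' (f t) = g t
  hnonmatch : ∀ t, M' (f (t + 1)) ≠ g t
  hedge : ∀ t, Edge (f (t + 1)) (g t)

/-- The weight `wt_{M'}(C)` of an alternating cycle. -/
def AltCycle1.wt {A B : Type*} {M' : A ≃ B} {Edge : A → B → Prop}
    (C : AltCycle1 M' Edge) (rA : A → B → ℕ) (rB : B → A → ℕ) : ℤ :=
  ∑ t : Fin (C.m + 2),
    (wt1 rA rB M' (C.f t) (C.g t) + wt1 rA rB M' (C.f (t + 1)) (C.g t))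

lemma vsgn_self (x : ℕ) : vsgn x x = 0 := by simp [vsgn]

lemma vsgn_anti (x y : ℕ) : vsgn x y = - vsgn y x := by
  unfold vsgn
  split_ifs <;> omega

lemma wt1_match {A B : Type*} (rA : A → B → ℕ) (rB : B → A → ℕ) (M' : A ≃ B) (a : A) :
    wt1 rA rB M' a (M' a) = 0 := by
  simp [wt1, vsgn_self]

/-- if `M'` is a perfect matching in a one-to-one bipartite instance
`H` such that every alternating cycle `C` w.r.t. `M'` has `wt_{M'}(C) ≤ 0`, then for
every perfect matching `N'` of `H` we have `Δ(M',N') ≥ 0`, i.e. `M'` is a popular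
perfect matching of `H`. -/
theorem stmt18 {A B : Type*} [Fintype A] [Fintype B] [DecidableEq A] [DecidableEq B]
    (Edge : A → B → Prop)
    (rA : A → B → ℕ) (rB : B → A → ℕ)
    (M' : A ≃ B) (hM' : ∀ a, Edge a (M' a))
    (hcyc : ∀ C : AltCycle1 M' Edge, C.wt rA rB ≤ 0)
    (N' : A ≃ B) (hN' : ∀ a, Edge a (N' a)) :
    0 ≤ (∑ a : A, vsgn (rA a (M' a)) (rA a (N' a))) +
      ∑ b : B, vsgn (rB b (M'.symm b)) (rB b (N'.symm b)) := by
  classical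
  set F : A → ℤ := fun a => wt1 rA rB M' a (N' a) with hF
  set ψ : Equiv.Perm A := M'.trans N'.symm with hψ
  have hψa : ∀ a, ψ a = N'.symm (M' a) := fun a => rfl
  -- every point is periodic under ψ
  have hper : ∀ a : A, a ∈ Function.periodicPts ψ := by
    intro a
    refine Function.mk_mem_periodicPts (orderOf_pos ψ) ?_
    show (⇑ψ)^[orderOf ψ] a = a
    rw [← Equiv.Perm.coe_pow, pow_orderOf_eq_one]; rfl
  -- key induction: sum of F over a ψ-invariant set is ≤ 0
  have key : ∀ n : ℕ, ∀ S : Finset A, S.card ≤ n → (∀ x ∈ S, ψ x ∈ S) →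
      ∑ x ∈ S, F x ≤ 0 := by
    intro n
    induction n with
    | zero =>
      intro S hS _
      have : S = ∅ := Finset.card_eq_zero.mp (Nat.le_zero.mp hS)
      simp [this]
    | succ n ih =>
      intro S hScard hSinv
      rcases S.eq_empty_or_nonempty with rfl | ⟨a, ha⟩
      · simp
      by_cases hfix : ψ a = a
      · -- fixed point: F a = 0, remove it
        have hNa : N' a = M' a := by
          have h := (hψa a).symm.trans hfix
          exact ((Equiv.symm_apply_eq N').mp h).symm
        have hFa : F a = 0 := by rw [hF]; simp only; rw [hNa, wt1_match]
        have hinv' : ∀ x ∈ S.erase a, ψ x ∈ S.erase a := by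
          intro x hx
          rcases Finset.mem_erase.mp hx with ⟨hxa, hxS⟩
          refine Finset.mem_erase.mpr ⟨?_, hSinv x hxS⟩
          intro h
          exact hxa (ψ.injective (h.trans hfix.symm))
        have hrec := ih (S.erase a) (by
          have := Finset.card_erase_of_mem ha
          omega) hinv'
        calc ∑ x ∈ S, F x = F a + ∑ x ∈ S.erase a, F x :=
              (Finset.add_sum_erase S F ha).symm
          _ ≤ 0 := by rw [hFa]; simpa using hrec
      · -- a is on a nontrivial cycle
        have hk0 : 0 < Function.minimalPeriod (⇑ψ) a :=
          Function.minimalPeriod_pos_of_mem_periodicPts (hper a)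
        have hk1 : Function.minimalPeriod (⇑ψ) a ≠ 1 := fun h =>
          hfix (Function.minimalPeriod_eq_one_iff_isFixedPt.mp h)
        obtain ⟨m, hm⟩ : ∃ m, Function.minimalPeriod (⇑ψ) a = m + 2 :=
          ⟨Function.minimalPeriod (⇑ψ) a - 2, by omega⟩
        set f : Fin (m + 2) → A := fun t => (⇑ψ)^[t.val] a with hfdef
        have hfinj : Function.Injective f := by
          intro s t hst
          have := Function.iterate_injOn_Iio_minimalPeriod (f := ⇑ψ) (x := a)
            (by simp only [Set.mem_Iio, hm]; exact s.isLt)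
            (by simp only [Set.mem_Iio, hm]; exact t.isLt) hst
          exact Fin.ext this
        have hmod : ∀ j : ℕ, (⇑ψ)^[j % (m + 2)] a = (⇑ψ)^[j] a := by
          intro j
          rw [← hm]
          exact Function.iterate_mod_minimalPeriod_eq
        have hfsucc : ∀ t : Fin (m + 2), f (t + 1) = ψ (f t) := by
          intro t
          show (⇑ψ)^[((t + 1 : Fin (m + 2)) : ℕ)] a = ψ ((⇑ψ)^[t.val] a)
          have hv : ((t + 1 : Fin (m + 2)) : ℕ) = (t.val + 1) % (m + 2) := by
            rw [Fin.val_add, Fin.val_one]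
          rw [hv, hmod, Function.iterate_succ_apply']
        set g : Fin (m + 2) → B := fun t => M' (f t) with hgdef
        have hginj : Function.Injective g := fun s t h => hfinj (M'.injective h)
        have hNf : ∀ t : Fin (m + 2), N' (f (t + 1)) = g t := by
          intro t
          rw [hfsucc t, hψa, Equiv.apply_symm_apply]
        have hmatch' : ∀ t, M' (f t) = g t := fun _ => rfl
        have hnonmatch' : ∀ t : Fin (m + 2), M' (f (t + 1)) ≠ g t := by
          intro t h
          have ht : t + 1 = t := hginj h
          have h10 : (1 : Fin (m + 2)) = 0 := left_eq_add.mp ht.symm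
          simpa using congrArg Fin.val h10
        have hedge' : ∀ t : Fin (m + 2), Edge (f (t + 1)) (g t) := by
          intro t
          have h1 : f (t + 1) = N'.symm (g t) := by rw [hfsucc t, hψa]
          have h2 := hN' (N'.symm (g t))
          rw [Equiv.apply_symm_apply] at h2
          rw [h1]; exact h2
        have hle : AltCycle1.wt
            (⟨m, f, g, hfinj, hginj, hmatch', hnonmatch', hedge'⟩ : AltCycle1 M' Edge)
            rA rB ≤ 0 := hcyc _
        have hwt : AltCycle1.wt
            (⟨m, f, g, hfinj, hginj, hmatch', hnonmatch', hedge'⟩ : AltCycle1 M' Edge)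
            rA rB = ∑ t : Fin (m + 2), F (f (t + 1)) := by
          show (∑ t : Fin (m + 2),
              (wt1 rA rB M' (f t) (g t) + wt1 rA rB M' (f (t + 1)) (g t))) = _
          refine Finset.sum_congr rfl fun t _ => ?_
          have h2 : M' (f t) = N' (f (t + 1)) := by rw [hNf t]
          rw [← hmatch' t, wt1_match, zero_add, h2]
        have hsum_shift : ∑ t : Fin (m + 2), F (f (t + 1)) = ∑ t : Fin (m + 2), F (f t) :=
          Fintype.sum_equiv (Equiv.addRight (1 : Fin (m + 2)))
            (fun t => F (f (t + 1))) (fun t => F (f t)) (fun t => rfl)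
        set O : Finset A := Finset.image f Finset.univ with hO
        have hsumO : ∑ x ∈ O, F x = ∑ t : Fin (m + 2), F (f t) :=
          Finset.sum_image (fun s _ t _ h => hfinj h)
        have hOle : ∑ x ∈ O, F x ≤ 0 := by
          rw [hsumO, ← hsum_shift, ← hwt]; exact hle
        have haO : a ∈ O := Finset.mem_image.mpr ⟨0, Finset.mem_univ _, rfl⟩
        have hiter : ∀ j : ℕ, (⇑ψ)^[j] a ∈ S := by
          intro j
          induction j with
          | zero => exact ha
          | succ j ihj =>
            rw [Function.iterate_succ_apply']
            exact hSinv _ ihj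
        have hOS : O ⊆ S := by
          intro x hx
          rcases Finset.mem_image.mp hx with ⟨t, _, rfl⟩
          exact hiter t.val
        have hOimg : O.image ψ = O := by
          apply Finset.eq_of_subset_of_card_le
          · intro x hx
            rcases Finset.mem_image.mp hx with ⟨y, hy, rfl⟩
            rcases Finset.mem_image.mp hy with ⟨t, _, rfl⟩
            rw [← hfsucc t]
            exact Finset.mem_image.mpr ⟨t + 1, Finset.mem_univ _, rfl⟩
          · rw [Finset.card_image_of_injective _ ψ.injective]
        have hinv' : ∀ x ∈ S \ O, ψ x ∈ S \ O := by
          intro x hx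
          rcases Finset.mem_sdiff.mp hx with ⟨hxS, hxO⟩
          refine Finset.mem_sdiff.mpr ⟨hSinv x hxS, fun h => ?_⟩
          rw [← hOimg] at h
          rcases Finset.mem_image.mp h with ⟨y, hy, hyx⟩
          exact hxO (ψ.injective hyx ▸ hy)
        have hcard' : (S \ O).card ≤ n := by
          have h1 := Finset.card_sdiff_of_subset hOS
          have h2 : 1 ≤ O.card := Finset.card_pos.mpr ⟨a, haO⟩
          have h3 : O.card ≤ S.card := Finset.card_le_card hOS
          omega
        have hrec := ih (S \ O) hcard' hinv'
        have hsplit : ∑ x ∈ S \ O, F x + ∑ x ∈ O, F x = ∑ x ∈ S, F x :=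
          Finset.sum_sdiff hOS
        linarith
  have htot : ∑ a : A, F a ≤ 0 :=
    key (Finset.univ.card) Finset.univ le_rfl (fun x _ => Finset.mem_univ _)
  -- rewrite the total sum
  set G : B → ℤ := fun b => vsgn (rB b (M'.symm b)) (rB b (N'.symm b)) with hG
  have hFsum : ∑ a : A, F a =
      -(∑ a : A, vsgn (rA a (M' a)) (rA a (N' a))) - ∑ a : A, G (N' a) := by
    have : ∀ a : A, F a = -(vsgn (rA a (M' a)) (rA a (N' a))) + -(G (N' a)) := by
      intro a
      rw [hF, hG]
      simp only [wt1]
      rw [Equiv.symm_apply_apply]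
      rw [vsgn_anti (rA a (N' a)), vsgn_anti (rB (N' a) a)]
    rw [Finset.sum_congr rfl (fun a _ => this a), Finset.sum_add_distrib,
      Finset.sum_neg_distrib, Finset.sum_neg_distrib]
    ring
  have hGsum : ∑ a : A, G (N' a) = ∑ b : B, G b := Equiv.sum_comp N' G
  rw [hFsum, hGsum] at htot
  linarith
end

section
/- Let M and N be perfect matchings in a many-to-many instance G, and C' a valid alternating cycle with respect to a realization M' such that N is obtained from M by switching along C' (i.e., N is the projection of M' ⊕ C'). If wt_{M'}(C') > 0, then Σ_{v} vote_v(M,N) < 0, i.e., N is more popular than M. -/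
/-- Vote in the cloned instance: clone preferences are lexicographic, first by the
rank of the underlying vertex, then by the clone index (lower index preferred). -/
def lsgn (r j r' j' : ℕ) : ℤ :=
  if r < r' ∨ (r = r' ∧ j < j') then 1
  else if r' < r ∨ (r' = r ∧ j' < j) then -1 else 0

/-- The clones of the vertices of `A`: vertex `a` is replaced by `cap a` clones. -/
abbrev Clones {A : Type*} (cap : A → ℕ) : Type _ := (a : A) × Fin (cap a)

/-- `M(a)`, the set of jobs matched to agent `a`. -/
def jobsOf {A B : Type*} [DecidableEq A] [DecidableEq B]
    (M : Finset (A × B)) (a : A) : Finset B :=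
  (M.filter (fun e => e.1 = a)).image Prod.snd

/-- `M(b)`, the set of agents matched to job `b`. -/
def agentsOf {A B : Type*} [DecidableEq A] [DecidableEq B]
    (M : Finset (A × B)) (b : B) : Finset A :=
  (M.filter (fun e => e.2 = b)).image Prod.fst

/-- The set of possible values `∑_{u ∈ S} vote(u, σ u)` over bijections `σ : S ≃ T`;
the vote `vote_v(S,T)` of the paper is the least element of this set. -/
def voteSet {B : Type*} (r : B → ℕ) (S T : Finset B) : Set ℤ :=
  {z | ∃ σ : {x // x ∈ S} ≃ {x // x ∈ T},
    z = ∑ x : {x // x ∈ S}, vsgn (r x.1) (r ((σ x).1))}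

/-- A perfect matching in the many-to-many instance: `M ⊆ E` and every vertex `v`
is matched to exactly `cap v` partners. -/
def IsPerfect {A B : Type*} [DecidableEq A] [DecidableEq B]
    (E M : Finset (A × B)) (capA : A → ℕ) (capB : B → ℕ) : Prop :=
  M ⊆ E ∧ (∀ a, (M.filter (fun e => e.1 = a)).card = capA a) ∧
    ∀ b, (M.filter (fun e => e.2 = b)).card = capB b

/-- `M` is a popular perfect matching: `M` is perfect and `Δ(M,N) ≥ 0` for every
perfect matching `N`, where each vertex votes using the most adversarial bijection
between `M(v) \ N(v)` and `N(v) \ M(v)`.  Since the minima at distinct vertices are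
independent, `Δ(M,N) ≥ 0` is equivalent to: every choice of one vote value per
vertex sums to a nonnegative number. -/
def PopularPerfect {A B : Type*} [Fintype A] [Fintype B] [DecidableEq A] [DecidableEq B]
    (E : Finset (A × B)) (capA : A → ℕ) (capB : B → ℕ)
    (rA : A → B → ℕ) (rB : B → A → ℕ) (M : Finset (A × B)) : Prop :=
  IsPerfect E M capA capB ∧
    ∀ N : Finset (A × B), IsPerfect E N capA capB →
      ∀ za : A → ℤ, ∀ zb : B → ℤ,
        (∀ a, za a ∈ voteSet (rA a) (jobsOf M a \ jobsOf N a) (jobsOf N a \ jobsOf M a)) →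
        (∀ b, zb b ∈ voteSet (rB b) (agentsOf M b \ agentsOf N b) (agentsOf N b \ agentsOf M b)) →
        0 ≤ (∑ a, za a) + ∑ b, zb b

/-- `M'` is a one-to-one realization of the many-to-many matching `M` in the cloned
instance: every `M'`-edge projects to an `M`-edge, and distinct clones of the same
agent are matched to clones of distinct jobs (so each `M`-edge is used once). -/
def Realizes {A B : Type*} {capA : A → ℕ} {capB : B → ℕ}
    (M' : Clones capA ≃ Clones capB) (M : Finset (A × B)) : Prop :=
  (∀ x, (x.1, (M' x).1) ∈ M) ∧
    ∀ x y : Clones capA, x ≠ y → x.1 = y.1 → (M' x).1 ≠ (M' y).1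

/-- The edge set `E'_{M'}` of the instance `G'_{M'}`: the edges of `M'` together
with all clone-copies of edges of `E \ M`. -/
def inEM {A B : Type*} [DecidableEq A] [DecidableEq B] {capA : A → ℕ} {capB : B → ℕ}
    (E M : Finset (A × B)) (M' : Clones capA ≃ Clones capB)
    (x : Clones capA) (y : Clones capB) : Prop :=
  M' x = y ∨ ((x.1, y.1) ∈ E ∧ (x.1, y.1) ∉ M)

/-- `wt_{M'}(x,y) = vote_x(y, M'(x)) + vote_y(x, M'(y))` in the cloned instance. -/
def wtEdge {A B : Type*} {capA : A → ℕ} {capB : B → ℕ}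
    (rA : A → B → ℕ) (rB : B → A → ℕ) (M' : Clones capA ≃ Clones capB)
    (x : Clones capA) (y : Clones capB) : ℤ :=
  lsgn (rA x.1 y.1) y.2 (rA x.1 (M' x).1) (M' x).2 +
    lsgn (rB y.1 x.1) x.2 (rB y.1 (M'.symm y).1) (M'.symm y).2

/-- An alternating cycle with respect to the (perfect one-to-one) matching `M'`,
with non-matching edges taken from the edge relation `Edge`: the cycle visits the
distinct clones `f 0, g 0, f 1, g 1, …` cyclically, `(f t, g t)` being `M'`-edges
and `(f (t+1), g t)` being non-matching edges of the instance. -/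
structure AltCycle {A B : Type*} {capA : A → ℕ} {capB : B → ℕ}
    (M' : Clones capA ≃ Clones capB)
    (Edge : Clones capA → Clones capB → Prop) where
  m : ℕ
  f : Fin (m + 2) → Clones capA
  g : Fin (m + 2) → Clones capB
  hf : Function.Injective f
  hg : Function.Injective g
  hmatch : ∀ t, M' (f t) = g t
  hnonmatch : ∀ t, M' (f (t + 1)) ≠ g t
  hedge : ∀ t, Edge (f (t + 1)) (g t)

/-- The weight `wt_{M'}(C)` of an alternating cycle: the sum of the weights of all
its edges. -/
def AltCycle.wt {A B : Type*} {capA : A → ℕ} {capB : B → ℕ}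
    {M' : Clones capA ≃ Clones capB} {Edge : Clones capA → Clones capB → Prop}
    (C : AltCycle M' Edge) (rA : A → B → ℕ) (rB : B → A → ℕ) : ℤ :=
  ∑ t : Fin (C.m + 2),
    (wtEdge rA rB M' (C.f t) (C.g t) + wtEdge rA rB M' (C.f (t + 1)) (C.g t))

/-- A cycle is valid if no two of its non-matching edges are clone-copies of the
same edge of `G` (matching edges are automatically distinct copies). -/
def AltCycle.Valid {A B : Type*} {capA : A → ℕ} {capB : B → ℕ}
    {M' : Clones capA ≃ Clones capB} {Edge : Clones capA → Clones capB → Prop}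
    (C : AltCycle M' Edge) : Prop :=
  Function.Injective (fun t : Fin (C.m + 2) => ((C.f (t + 1)).1, (C.g t).1))

lemma lsgn_self (r j : ℕ) : lsgn r j r j = 0 := by unfold lsgn; split_ifs <;> omega

lemma lsgn_eq_vsgn {r r' : ℕ} (j j' : ℕ) (h : r ≠ r') : lsgn r j r' j' = vsgn r r' := by
  unfold lsgn vsgn; split_ifs <;> omega

lemma voteSet_mem {ι B : Type*} [DecidableEq B] [Fintype ι] (r : B → ℕ) (I : Finset ι)
    (p q : ι → B) (hp : Set.InjOn p I) (hq : Set.InjOn q I) (S T : Finset B)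
    (hS : S = I.image p) (hT : T = I.image q) :
    (∑ t ∈ I, vsgn (r (p t)) (r (q t))) ∈ voteSet r S T := by
  subst hS hT
  have h1 : Function.Bijective (fun t : {t // t ∈ I} =>
      (⟨p t.1, Finset.mem_image_of_mem p t.2⟩ : {x // x ∈ I.image p})) := by
    constructor
    · rintro ⟨t, ht⟩ ⟨s, hs⟩ h
      have := hp ht hs (congrArg Subtype.val h)
      subst this; rfl
    · rintro ⟨x, hx⟩
      obtain ⟨t, ht, rfl⟩ := Finset.mem_image.1 hx
      exact ⟨⟨t, ht⟩, rfl⟩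
  have h2 : Function.Bijective (fun t : {t // t ∈ I} =>
      (⟨q t.1, Finset.mem_image_of_mem q t.2⟩ : {x // x ∈ I.image q})) := by
    constructor
    · rintro ⟨t, ht⟩ ⟨s, hs⟩ h
      have := hq ht hs (congrArg Subtype.val h)
      subst this; rfl
    · rintro ⟨x, hx⟩
      obtain ⟨t, ht, rfl⟩ := Finset.mem_image.1 hx
      exact ⟨⟨t, ht⟩, rfl⟩
  refine ⟨(Equiv.ofBijective _ h1).symm.trans (Equiv.ofBijective _ h2), ?_⟩
  rw [← Equiv.sum_comp (Equiv.ofBijective _ h1)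
    (fun x : {x // x ∈ I.image p} => vsgn (r x.1) (r ((((Equiv.ofBijective _ h1).symm.trans
      (Equiv.ofBijective _ h2)) x).1)))]
  rw [← Finset.sum_coe_sort I (fun t => vsgn (r (p t)) (r (q t)))]
  simp [Equiv.trans_apply]

/-- let `M` be a perfect matching of a many-to-many instance `G` with
realization `M'`, and let `C` be a *valid* alternating cycle w.r.t. `M'` in
`G'_{M'}` with `wt_{M'}(C) > 0`.  Let `N'` be the matching obtained from `M'` by
switching along `C` and let `N` be its projection to `G`.  Then
`Δ(M,N) = Σ_v vote_v(M,N) < 0` (the vote values `za`, `zb` being the minima), i.e.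
`N` is more popular than `M`. -/
theorem stmt19 {A B : Type*} [Fintype A] [Fintype B] [DecidableEq A] [DecidableEq B]
    (capA : A → ℕ) (capB : B → ℕ)
    (rA : A → B → ℕ) (rB : B → A → ℕ)
    (hrA : ∀ a, Function.Injective (rA a)) (hrB : ∀ b, Function.Injective (rB b))
    (E M : Finset (A × B)) (hM : IsPerfect E M capA capB)
    (M' : Clones capA ≃ Clones capB) (hreal : Realizes M' M)
    (C : AltCycle M' (inEM E M M')) (hvalid : C.Valid) (hC : 0 < C.wt rA rB)
    (N' : Clones capA ≃ Clones capB)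
    (hswap : ∀ t, N' (C.f (t + 1)) = C.g t)
    (hfix : ∀ x : Clones capA, (∀ t, C.f t ≠ x) → N' x = M' x)
    (N : Finset (A × B))
    (hN : N = Finset.univ.image (fun x : Clones capA => (x.1, (N' x).1)))
    (za : A → ℤ) (zb : B → ℤ)
    (hza : ∀ a, IsLeast
      (voteSet (rA a) (jobsOf M a \ jobsOf N a) (jobsOf N a \ jobsOf M a)) (za a))
    (hzb : ∀ b, IsLeast
      (voteSet (rB b) (agentsOf M b \ agentsOf N b) (agentsOf N b \ agentsOf M b)) (zb b)) :
    (∑ a, za a) + ∑ b, zb b < 0 := by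
  classical
  obtain ⟨hME, hMa, hMb⟩ := hM
  obtain ⟨hMmem, hMdist⟩ := hreal
  have hjobs : ∀ (P : Finset (A × B)) (a : A) (b : B), b ∈ jobsOf P a ↔ (a, b) ∈ P := by
    intro P a b
    simp only [jobsOf, Finset.mem_image, Finset.mem_filter]
    constructor
    · rintro ⟨⟨a', b'⟩, ⟨hmem, h1⟩, h2⟩
      simp only at h1 h2
      subst h1; subst h2; exact hmem
    · intro h; exact ⟨(a, b), ⟨h, rfl⟩, rfl⟩
  have hagents : ∀ (P : Finset (A × B)) (b : B) (a : A), a ∈ agentsOf P b ↔ (a, b) ∈ P := by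
    intro P b a
    simp only [agentsOf, Finset.mem_image, Finset.mem_filter]
    constructor
    · rintro ⟨⟨a', b'⟩, ⟨hmem, h1⟩, h2⟩
      simp only at h1 h2
      subst h1; subst h2; exact hmem
    · intro h; exact ⟨(a, b), ⟨h, rfl⟩, rfl⟩
  have hMchar : ∀ a b, (a, b) ∈ M ↔ ∃ x : Clones capA, x.1 = a ∧ (M' x).1 = b := by
    intro a b
    constructor
    · intro hab
      have hΦinj : Function.Injective (fun j : Fin (capA a) => ((a, (M' ⟨a, j⟩).1) : A × B)) := by
        intro i j hij
        by_contra hne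
        exact hMdist ⟨a, i⟩ ⟨a, j⟩
          (fun hc => hne (heq_iff_eq.mp (Sigma.mk.inj_iff.mp hc).2)) rfl
          (congrArg Prod.snd hij)
      have hsub : Finset.univ.image (fun j : Fin (capA a) => ((a, (M' ⟨a, j⟩).1) : A × B)) ⊆
          M.filter (fun e => e.1 = a) := by
        intro e he
        obtain ⟨j, -, rfl⟩ := Finset.mem_image.1 he
        exact Finset.mem_filter.2 ⟨hMmem ⟨a, j⟩, rfl⟩
      have heq := Finset.eq_of_subset_of_card_le hsub (by
        rw [Finset.card_image_of_injective _ hΦinj, Finset.card_univ, Fintype.card_fin, hMa a])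
      have hmem2 : (a, b) ∈ Finset.univ.image
          (fun j : Fin (capA a) => ((a, (M' ⟨a, j⟩).1) : A × B)) :=
        heq ▸ Finset.mem_filter.2 ⟨hab, rfl⟩
      obtain ⟨j, -, hj⟩ := Finset.mem_image.1 hmem2
      exact ⟨⟨a, j⟩, rfl, congrArg Prod.snd hj⟩
    · rintro ⟨x, rfl, rfl⟩; exact hMmem x
  have hMcharB : ∀ a b, (a, b) ∈ M → ∃ y : Clones capB, y.1 = b ∧ (M'.symm y).1 = a := by
    intro a b hab
    have hΨinj : Function.Injective
        (fun j : Fin (capB b) => (((M'.symm ⟨b, j⟩).1, b) : A × B)) := by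
      intro i j hij
      by_contra hne
      have hxy : M'.symm ⟨b, i⟩ ≠ M'.symm ⟨b, j⟩ := by
        intro hc
        exact hne (heq_iff_eq.mp (Sigma.mk.inj_iff.mp (M'.symm.injective hc)).2)
      exact hMdist _ _ hxy (congrArg Prod.fst hij)
        (by rw [Equiv.apply_symm_apply, Equiv.apply_symm_apply])
    have hsub : Finset.univ.image (fun j : Fin (capB b) => (((M'.symm ⟨b, j⟩).1, b) : A × B)) ⊆
        M.filter (fun e => e.2 = b) := by
      intro e he
      obtain ⟨j, -, rfl⟩ := Finset.mem_image.1 he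
      refine Finset.mem_filter.2 ⟨?_, rfl⟩
      have := hMmem (M'.symm ⟨b, j⟩)
      rwa [Equiv.apply_symm_apply] at this
    have heq := Finset.eq_of_subset_of_card_le hsub (by
      rw [Finset.card_image_of_injective _ hΨinj, Finset.card_univ, Fintype.card_fin, hMb b])
    have hmem2 : (a, b) ∈ Finset.univ.image
        (fun j : Fin (capB b) => (((M'.symm ⟨b, j⟩).1, b) : A × B)) :=
      heq ▸ Finset.mem_filter.2 ⟨hab, rfl⟩
    obtain ⟨j, -, hj⟩ := Finset.mem_image.1 hmem2
    exact ⟨⟨b, j⟩, rfl, congrArg Prod.fst hj⟩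
  have hNchar : ∀ a b, ((a, b) ∈ N ↔ ∃ x : Clones capA, x.1 = a ∧ (N' x).1 = b) := by
    intro a b
    rw [hN]
    simp only [Finset.mem_image, Finset.mem_univ, true_and]
    constructor
    · rintro ⟨x, hx⟩
      exact ⟨x, congrArg Prod.fst hx, congrArg Prod.snd hx⟩
    · rintro ⟨x, h1, h2⟩
      exact ⟨x, by rw [h1, h2]⟩
  have hcyc : ∀ t : Fin (C.m + 2), ((C.f (t + 1)).1, (C.g t).1) ∉ M := by
    intro t
    rcases C.hedge t with h | h
    · exact absurd h (C.hnonmatch t)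
    · exact h.2
  have hsymm : ∀ t : Fin (C.m + 2), M'.symm (C.g t) = C.f t := by
    intro t; rw [← C.hmatch t, Equiv.symm_apply_apply]
  have hMt : ∀ t : Fin (C.m + 2), ((C.f (t + 1)).1, (C.g (t + 1)).1) ∈ M := by
    intro t; have := hMmem (C.f (t + 1)); rwa [C.hmatch] at this
  have hMt0 : ∀ t : Fin (C.m + 2), ((C.f t).1, (C.g t).1) ∈ M := by
    intro t; have := hMmem (C.f t); rwa [C.hmatch] at this
  have hsub1 : ∀ w : Fin (C.m + 2), w - 1 + 1 = w := fun w => sub_add_cancel w 1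
  have hNcycle : ∀ w : Fin (C.m + 2), N' (C.f w) = C.g (w - 1) := by
    intro w
    have := hswap (w - 1)
    rwa [hsub1 w] at this
  have hneA : ∀ t : Fin (C.m + 2),
      rA (C.f (t + 1)).1 (C.g t).1 ≠ rA (C.f (t + 1)).1 (C.g (t + 1)).1 := by
    intro t h
    have h2 := hrA _ h
    exact hcyc t (by rw [h2]; exact hMt t)
  have hneB : ∀ t : Fin (C.m + 2),
      rB (C.g t).1 (C.f (t + 1)).1 ≠ rB (C.g t).1 (C.f t).1 := by
    intro t h
    have h2 := hrB _ h
    exact hcyc t (by rw [h2]; exact hMt0 t)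
  have keyA : ∀ a : A, za a ≤
      ∑ t ∈ Finset.univ.filter (fun t : Fin (C.m + 2) => (C.f (t + 1)).1 = a),
        vsgn (rA a (C.g (t + 1)).1) (rA a (C.g t).1) := by
    intro a
    apply (hza a).2
    apply voteSet_mem (rA a) _ (fun t => (C.g (t + 1)).1) (fun t => (C.g t).1)
    · intro t ht s hs h
      simp only [Finset.coe_filter, Finset.mem_univ, true_and, Set.mem_setOf_eq] at ht hs
      by_contra hne
      have hfne : C.f (t + 1) ≠ C.f (s + 1) := fun hc => hne (add_right_cancel (C.hf hc))
      exact hMdist _ _ hfne (ht.trans hs.symm)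
        (show (M' (C.f (t + 1))).1 = (M' (C.f (s + 1))).1 by rw [C.hmatch, C.hmatch]; exact h)
    · intro t ht s hs h
      simp only [Finset.coe_filter, Finset.mem_univ, true_and, Set.mem_setOf_eq] at ht hs
      exact hvalid (Prod.ext (ht.trans hs.symm) h)
    · ext b
      simp only [Finset.mem_sdiff, hjobs, Finset.mem_image, Finset.mem_filter,
        Finset.mem_univ, true_and]
      constructor
      · rintro ⟨hbM, hbN⟩
        obtain ⟨x, hxa, hxb⟩ := (hMchar a b).1 hbM
        by_cases hx : ∀ u, C.f u ≠ x
        · exact absurd ((hNchar a b).2 ⟨x, hxa, by rw [hfix x hx, hxb]⟩) hbN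
        · push_neg at hx
          obtain ⟨w, hw⟩ := hx
          refine ⟨w - 1, ?_, ?_⟩
          · rw [hsub1 w, hw]; exact hxa
          · rw [hsub1 w, ← hxb, ← hw, C.hmatch]
      · rintro ⟨t, hta, rfl⟩
        constructor
        · rw [← hta]; exact hMt t
        · intro hbN
          obtain ⟨x, hxa, hxb⟩ := (hNchar _ _).1 hbN
          by_cases hx : ∀ u, C.f u ≠ x
          · have hne : x ≠ C.f (t + 1) := fun h => hx (t + 1) h.symm
            refine hMdist x (C.f (t + 1)) hne (by rw [hxa, hta]) ?_
            rw [← hfix x hx, hxb, C.hmatch]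
          · push_neg at hx
            obtain ⟨w, hw⟩ := hx
            have h1 : (C.g (w - 1)).1 = (C.g (t + 1)).1 := by
              rw [← hxb, ← hw, hNcycle]
            have h2 : ((C.f w).1, (C.g (w - 1)).1) ∉ M := by
              have := hcyc (w - 1); rwa [hsub1 w] at this
            refine h2 ?_
            rw [hw, hxa, ← hta, h1]
            exact hMt t
    · ext b
      simp only [Finset.mem_sdiff, hjobs, Finset.mem_image, Finset.mem_filter,
        Finset.mem_univ, true_and]
      constructor
      · rintro ⟨hbN, hbM⟩
        obtain ⟨x, hxa, hxb⟩ := (hNchar _ _).1 hbN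
        by_cases hx : ∀ u, C.f u ≠ x
        · exact absurd ((hMchar a b).2 ⟨x, hxa, by rw [← hfix x hx, hxb]⟩) hbM
        · push_neg at hx
          obtain ⟨w, hw⟩ := hx
          refine ⟨w - 1, ?_, ?_⟩
          · rw [hsub1 w, hw]; exact hxa
          · rw [← hxb, ← hw, hNcycle]
      · rintro ⟨t, hta, rfl⟩
        constructor
        · exact (hNchar _ _).2 ⟨C.f (t + 1), hta, by rw [hswap]⟩
        · rw [← hta]; exact hcyc t
  have keyB : ∀ b : B, zb b ≤
      ∑ t ∈ Finset.univ.filter (fun t : Fin (C.m + 2) => (C.g t).1 = b),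
        vsgn (rB b (C.f t).1) (rB b (C.f (t + 1)).1) := by
    intro b
    apply (hzb b).2
    apply voteSet_mem (rB b) _ (fun t => (C.f t).1) (fun t => (C.f (t + 1)).1)
    · intro t ht s hs h
      simp only [Finset.coe_filter, Finset.mem_univ, true_and, Set.mem_setOf_eq] at ht hs
      by_contra hne
      have hfne : C.f t ≠ C.f s := fun hc => hne (C.hf hc)
      exact hMdist _ _ hfne h
        (show (M' (C.f t)).1 = (M' (C.f s)).1 by rw [C.hmatch, C.hmatch, ht, hs])
    · intro t ht s hs h
      simp only [Finset.coe_filter, Finset.mem_univ, true_and, Set.mem_setOf_eq] at ht hs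
      exact hvalid (Prod.ext h (ht.trans hs.symm))
    · ext a
      simp only [Finset.mem_sdiff, hagents, Finset.mem_image, Finset.mem_filter,
        Finset.mem_univ, true_and]
      constructor
      · rintro ⟨haM, haN⟩
        obtain ⟨y, hyb, hya⟩ := hMcharB a b haM
        by_cases hx : ∀ u, C.f u ≠ M'.symm y
        · refine absurd ((hNchar a b).2 ⟨M'.symm y, hya, ?_⟩) haN
          rw [hfix _ hx, Equiv.apply_symm_apply, hyb]
        · push_neg at hx
          obtain ⟨w, hw⟩ := hx
          refine ⟨w, ?_, ?_⟩
          · rw [← C.hmatch, hw, Equiv.apply_symm_apply, hyb]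
          · rw [hw, hya]
      · rintro ⟨t, htb, rfl⟩
        constructor
        · rw [← htb]; exact hMt0 t
        · intro haN
          obtain ⟨x, hxa, hxb⟩ := (hNchar _ _).1 haN
          by_cases hx : ∀ u, C.f u ≠ x
          · have hne : x ≠ C.f t := fun h => hx t h.symm
            refine hMdist x (C.f t) hne hxa ?_
            rw [← hfix x hx, hxb, C.hmatch, htb]
          · push_neg at hx
            obtain ⟨w, hw⟩ := hx
            have h2 : ((C.f w).1, (C.g (w - 1)).1) ∉ M := by
              have := hcyc (w - 1); rwa [hsub1 w] at this
            refine h2 ?_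
            have h1 : (C.g (w - 1)).1 = b := by rw [← hxb, ← hw, hNcycle]
            rw [hw, hxa, h1, ← htb]
            exact hMt0 t
    · ext a
      simp only [Finset.mem_sdiff, hagents, Finset.mem_image, Finset.mem_filter,
        Finset.mem_univ, true_and]
      constructor
      · rintro ⟨haN, haM⟩
        obtain ⟨x, hxa, hxb⟩ := (hNchar _ _).1 haN
        by_cases hx : ∀ u, C.f u ≠ x
        · refine absurd ?_ haM
          have hm := hMmem x
          rwa [hxa, ← hfix x hx, hxb] at hm
        · push_neg at hx
          obtain ⟨w, hw⟩ := hx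
          refine ⟨w - 1, ?_, ?_⟩
          · rw [← hxb, ← hw, hNcycle]
          · rw [hsub1 w, hw]; exact hxa
      · rintro ⟨t, htb, rfl⟩
        constructor
        · exact (hNchar _ _).2 ⟨C.f (t + 1), rfl, by rw [hswap, htb]⟩
        · rw [← htb]; exact hcyc t
  have hsumA : (∑ a, ∑ t ∈ Finset.univ.filter (fun t : Fin (C.m + 2) => (C.f (t + 1)).1 = a),
      vsgn (rA a (C.g (t + 1)).1) (rA a (C.g t).1)) =
      ∑ t : Fin (C.m + 2),
        vsgn (rA (C.f (t + 1)).1 (C.g (t + 1)).1) (rA (C.f (t + 1)).1 (C.g t).1) := by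
    rw [← Finset.sum_fiberwise_of_maps_to
      (fun (t : Fin (C.m + 2)) (_ : t ∈ Finset.univ) => Finset.mem_univ ((C.f (t + 1)).1))
      (fun t => vsgn (rA (C.f (t + 1)).1 (C.g (t + 1)).1) (rA (C.f (t + 1)).1 (C.g t).1))]
    refine Finset.sum_congr rfl fun a _ => Finset.sum_congr rfl fun t ht => ?_
    rw [(Finset.mem_filter.1 ht).2]
  have hsumB : (∑ b, ∑ t ∈ Finset.univ.filter (fun t : Fin (C.m + 2) => (C.g t).1 = b),
      vsgn (rB b (C.f t).1) (rB b (C.f (t + 1)).1)) =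
      ∑ t : Fin (C.m + 2),
        vsgn (rB (C.g t).1 (C.f t).1) (rB (C.g t).1 (C.f (t + 1)).1) := by
    rw [← Finset.sum_fiberwise_of_maps_to
      (fun (t : Fin (C.m + 2)) (_ : t ∈ Finset.univ) => Finset.mem_univ ((C.g t).1))
      (fun t => vsgn (rB (C.g t).1 (C.f t).1) (rB (C.g t).1 (C.f (t + 1)).1))]
    refine Finset.sum_congr rfl fun b _ => Finset.sum_congr rfl fun t ht => ?_
    rw [(Finset.mem_filter.1 ht).2]
  have hwt : (∑ t : Fin (C.m + 2),
        vsgn (rA (C.f (t + 1)).1 (C.g (t + 1)).1) (rA (C.f (t + 1)).1 (C.g t).1)) +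
      (∑ t : Fin (C.m + 2),
        vsgn (rB (C.g t).1 (C.f t).1) (rB (C.g t).1 (C.f (t + 1)).1)) = - C.wt rA rB := by
    unfold AltCycle.wt
    rw [← Finset.sum_add_distrib, ← Finset.sum_neg_distrib]
    refine Finset.sum_congr rfl fun t _ => ?_
    have h1 : wtEdge rA rB M' (C.f t) (C.g t) = 0 := by
      unfold wtEdge
      rw [C.hmatch t, hsymm t, lsgn_self, lsgn_self, add_zero]
    have h2 : wtEdge rA rB M' (C.f (t + 1)) (C.g t) =
        vsgn (rA (C.f (t + 1)).1 (C.g t).1) (rA (C.f (t + 1)).1 (C.g (t + 1)).1) +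
        vsgn (rB (C.g t).1 (C.f (t + 1)).1) (rB (C.g t).1 (C.f t).1) := by
      unfold wtEdge
      rw [C.hmatch (t + 1), hsymm t, lsgn_eq_vsgn _ _ (hneA t), lsgn_eq_vsgn _ _ (hneB t)]
    rw [h1, h2, zero_add,
      vsgn_anti (rA (C.f (t + 1)).1 (C.g t).1) (rA (C.f (t + 1)).1 (C.g (t + 1)).1),
      vsgn_anti (rB (C.g t).1 (C.f (t + 1)).1) (rB (C.g t).1 (C.f t).1)]
    ring
  have hA := Finset.sum_le_sum (fun a (_ : a ∈ (Finset.univ : Finset A)) => keyA a)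
  have hB := Finset.sum_le_sum (fun b (_ : b ∈ (Finset.univ : Finset B)) => keyB b)
  have htot := add_le_add hA hB
  rw [hsumA, hsumB] at htot
  linarith
end
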